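/- Let θ ∈ (0, 1/2), α > 0, t' > 0, and suppose σ : [t', ∞) → [0, ∞) is differentiable, nonincreasing, and satisfies σ'(t) ≤ -α·t·σ(t)^{θ/(1-θ)} whenever σ(t) > 0. Then there exists T ≥ t' such that σ(t) = 0 for all t ≥ T. -/

import Mathlib

/-- Finite-time convergence for Łojasiewicz exponent `θ ∈ (0,1/2)`: if `σ ≥ 0` is
nonincreasing, differentiable, and `σ'(t) ≤ -α t σ(t)^{θ/(1-θ)}` whenever `σ(t) > 0`,
then `σ` vanishes from some time `T` on. -/
theorem stmt_13 (θ t' α : ℝ) (hθ₁ : 0 < θ) (hθ₂ : θ < 1 / 2) (ht' : 0 < t') (hα : 0 < α)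
    (σ σ' : ℝ → ℝ)
    (hnonneg : ∀ t ≥ t', 0 ≤ σ t)
    (hmono : AntitoneOn σ (Set.Ici t'))
    (hderiv : ∀ t ≥ t', HasDerivAt σ (σ' t) t)
    (hineq : ∀ t ≥ t', 0 < σ t → σ' t ≤ -α * t * (σ t) ^ (θ / (1 - θ))) :
    ∃ T ≥ t', ∀ t ≥ T, σ t = 0 := by
  suffices h : ∃ T ≥ t', σ T = 0 by
    obtain ⟨T, hT, hT0⟩ := h
    refine ⟨T, hT, fun t ht => le_antisymm ?_ (hnonneg t (hT.trans ht))⟩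
    calc σ t ≤ σ T := hmono (Set.mem_Ici.mpr hT) (Set.mem_Ici.mpr (hT.trans ht)) ht
    _ = 0 := hT0
  by_contra hc
  push_neg at hc
  have hpos : ∀ t ≥ t', 0 < σ t := fun t ht =>
    lt_of_le_of_ne (hnonneg t ht) (Ne.symm (hc t ht))
  set p : ℝ := θ / (1 - θ) with hp
  set c : ℝ := (1 - 2 * θ) / (1 - θ) with hcdef
  have hθ3 : 0 < 1 - θ := by linarith
  have hc0 : 0 < c := div_pos (by linarith) hθ3
  have hcp : p + (c - 1) = 0 := by
    rw [hp, hcdef]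
    field_simp
    ring
  -- F is nonincreasing
  set F : ℝ → ℝ := fun s => σ s ^ c + c * α * s ^ 2 / 2 with hFdef
  have hF : ∀ t ≥ t', HasDerivAt F (σ' t * c * σ t ^ (c - 1) + c * α * t) t := by
    intro t ht
    have h1 := (hderiv t ht).rpow_const (p := c) (Or.inl (ne_of_gt (hpos t ht)))
    have h2 : HasDerivAt (fun s : ℝ => c * α * s ^ 2 / 2) (c * α * t) t := by
      have h3 : HasDerivAt (fun s : ℝ => s ^ 2) (2 * t) t := by
        simpa using hasDerivAt_pow 2 t
      have := (h3.const_mul (c * α)).div_const 2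
      exact this.congr_deriv (by ring)
    exact h1.add h2
  have hderivle : ∀ t ≥ t', σ' t * c * σ t ^ (c - 1) + c * α * t ≤ 0 := by
    intro t ht
    have hσ := hpos t ht
    have hpw : σ t ^ p * σ t ^ (c - 1) = 1 := by
      rw [← Real.rpow_add hσ, hcp, Real.rpow_zero]
    have hpw2 : (0:ℝ) < σ t ^ (c - 1) := Real.rpow_pos_of_pos hσ _
    have hle := hineq t ht hσ
    have ht0 : (0:ℝ) < t := lt_of_lt_of_le ht' ht
    have hmul := mul_le_mul_of_nonneg_right hle (le_of_lt (mul_pos hc0 hpw2))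
    have heq : -α * t * σ t ^ p * (c * σ t ^ (c - 1)) = -(c * α * t) := by
      rw [show -α * t * σ t ^ p * (c * σ t ^ (c - 1))
          = -(α * t * c) * (σ t ^ p * σ t ^ (c - 1)) by ring, hpw]
      ring
    rw [heq] at hmul
    linarith
  have hanti : AntitoneOn F (Set.Ici t') := by
    apply antitoneOn_of_deriv_nonpos (convex_Ici t')
    · exact fun x hx => (hF x hx).continuousAt.continuousWithinAt
    · intro x hx
      rw [interior_Ici] at hx
      exact (hF x (le_of_lt hx)).differentiableAt.differentiableWithinAt
    · intro x hx
      rw [interior_Ici] at hx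
      rw [(hF x (le_of_lt hx)).deriv]
      exact hderivle x (le_of_lt hx)
  -- contradiction for large t
  set K : ℝ := F t' with hK
  have hK0 : 0 < K := by
    have : (0:ℝ) < σ t' ^ c := Real.rpow_pos_of_pos (hpos t' le_rfl) _
    have : (0:ℝ) < c * α * t' ^ 2 / 2 := by positivity
    simp only [hK, hFdef]
    positivity
  set M : ℝ := 2 * K / (c * α) with hM
  have hM0 : 0 < M := by positivity
  set t : ℝ := max t' (Real.sqrt M + 1) with htdef
  have ht : t' ≤ t := le_max_left _ _
  have hFle : F t ≤ K := hanti (Set.mem_Ici.mpr le_rfl) (Set.mem_Ici.mpr ht) ht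
  have hσc : 0 < σ t ^ c := Real.rpow_pos_of_pos (hpos t ht) _
  have h1 : c * α * t ^ 2 / 2 ≤ K := by
    have : F t = σ t ^ c + c * α * t ^ 2 / 2 := rfl
    linarith [hFle, hσc, this ▸ hFle]
  have h2 : Real.sqrt M + 1 ≤ t := le_max_right _ _
  have h3 : Real.sqrt M ^ 2 = M := Real.sq_sqrt hM0.le
  have h4 : 0 ≤ Real.sqrt M := Real.sqrt_nonneg _
  have hca : 0 < c * α := by positivity
  have hMK : M * (c * α) = 2 * K := by
    rw [hM, div_mul_cancel₀ _ hca.ne']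
  have h5 : M + 1 ≤ t ^ 2 := by nlinarith
  have h6 := mul_le_mul_of_nonneg_left h5 hca.le
  clear_value p c F K M t
  nlinarith
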